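/- Let x̂, ŷ ∈ ℝⁿ be strictly increasing vectors and let τ ∈ S_n be a permutation with negative sign. Then Q(x̂) + Q(ŷ) ≤ ‖x̂ − τŷ‖₁, where Q(z) = min_{1≤j≤n−1}(z_{j+1} − z_j). -/

import Mathlib

/-- The nondecreasing rearrangement (sorting) of a vector. -/
noncomputable def sortVec {n : ℕ} (x : Fin n → ℝ) : Fin n → ℝ := x ∘ Tuple.sort x

/-- Q(x) = (∏_{i<j} sign(x_j - x_i)) · min_{i<j} |x_j - x_i|. -/
noncomputable def Qfun {n : ℕ} (x : Fin n → ℝ) : ℝ :=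
  (∏ i : Fin n, ∏ j ∈ Finset.Ioi i, Real.sign (x j - x i)) *
  sInf {d : ℝ | ∃ i j : Fin n, i < j ∧ d = |x j - x i|}

/-- Minimal adjacent gap min_{j} (x_{j+1} - x_j). -/
noncomputable def minGap {n : ℕ} (x : Fin n → ℝ) : ℝ :=
  sInf {d : ℝ | ∃ i j : Fin n, (i : ℕ) + 1 = (j : ℕ) ∧ d = x j - x i}

/-- d_±(x,y) = min_{σ ∈ S_n} ‖x - σy‖₁ where (σy)_i = y_{σ(i)}. -/
noncomputable def dpm {n : ℕ} (x y : Fin n → ℝ) : ℝ :=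
  Finset.univ.inf' Finset.univ_nonempty fun σ : Equiv.Perm (Fin n) => ∑ i, |x i - y (σ i)|

/-- d_+(x,y) = min_{σ ∈ A_n} ‖x - σy‖₁. -/
noncomputable def dplus {n : ℕ} (x y : Fin n → ℝ) : ℝ :=
  Finset.univ.inf' Finset.univ_nonempty fun σ : alternatingGroup (Fin n) =>
    ∑ i, |x i - y ((σ : Equiv.Perm (Fin n)) i)|

lemma minGap_le_adj {n : ℕ} (x : Fin n → ℝ) (i j : Fin n) (h : (i : ℕ) + 1 = (j : ℕ)) :
    minGap x ≤ x j - x i := by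
  apply csInf_le
  · apply Set.Finite.bddBelow
    apply Set.Finite.subset (Set.finite_range fun p : Fin n × Fin n => x p.2 - x p.1)
    rintro d ⟨a, b, -, rfl⟩
    exact ⟨(a, b), rfl⟩
  · exact ⟨i, j, h, rfl⟩

lemma minGap_le_sub {n : ℕ} {x : Fin n → ℝ} (hx : StrictMono x) {a b : Fin n} (hab : a < b) :
    minGap x ≤ x b - x a := by
  have hb : (a : ℕ) + 1 < n := lt_of_le_of_lt (by exact_mod_cast hab) b.isLt
  set j : Fin n := ⟨(a : ℕ) + 1, hb⟩ with hj
  have h1 : minGap x ≤ x j - x a := minGap_le_adj x a j rfl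
  have h2 : x j ≤ x b := hx.monotone (by simpa [hj, Fin.le_def] using hab)
  linarith

theorem stmt10 (n : ℕ) (hn : 2 ≤ n) (x y : Fin n → ℝ)
    (hx : StrictMono x) (hy : StrictMono y)
    (τ : Equiv.Perm (Fin n)) (hτ : Equiv.Perm.sign τ = -1) :
    minGap x + minGap y ≤ ∑ i, |x i - y (τ i)| := by
  obtain ⟨m, rfl⟩ : ∃ m, n = m + 1 := ⟨n - 1, by omega⟩
  have hdesc : ∃ i : Fin m, τ i.succ < τ i.castSucc := by
    by_contra h
    push_neg at h
    have hsm : StrictMono τ := Fin.strictMono_iff_lt_succ.mpr (fun i => by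
      rcases lt_or_eq_of_le (h i) with h' | h'
      · exact h'
      · exact absurd (τ.injective h') (Fin.castSucc_lt_succ (i := i)).ne)
    have hid : (τ : Fin (m + 1) → Fin (m + 1)) = id :=
      (StrictMono.range_inj hsm strictMono_id).mp
        (by rw [τ.surjective.range_eq, Set.range_id])
    have : τ = 1 := Equiv.ext fun a => congrFun hid a
    rw [this] at hτ
    simp at hτ
  obtain ⟨i, hi⟩ := hdesc
  set i1 := i.castSucc
  set i2 := i.succ
  have hne : i1 ≠ i2 := (Fin.castSucc_lt_succ (i := i)).ne
  have hsub : minGap x + minGap y ≤ |x i1 - y (τ i1)| + |x i2 - y (τ i2)| := by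
    have h1 : minGap x ≤ x i2 - x i1 := minGap_le_adj x i1 i2 (by simp [i1, i2])
    have h2 : minGap y ≤ y (τ i1) - y (τ i2) := minGap_le_sub hy hi
    have h3 : y (τ i1) - x i1 ≤ |x i1 - y (τ i1)| := by
      rw [abs_sub_comm]; exact le_abs_self _
    have h4 : x i2 - y (τ i2) ≤ |x i2 - y (τ i2)| := le_abs_self _
    linarith
  calc minGap x + minGap y ≤ ∑ k ∈ ({i1, i2} : Finset (Fin (m+1))), |x k - y (τ k)| := by
        rwa [Finset.sum_pair hne]
    _ ≤ ∑ k, |x k - y (τ k)| :=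
        Finset.sum_le_sum_of_subset_of_nonneg (Finset.subset_univ _)
          (fun k _ _ => abs_nonneg _)
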